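/- Let g be a finite directed graph with source s, and suppose every vertex reachable from s (other than s) has a unique immediate dominator, forming a dominator tree T rooted at s. For any vertex u ≠ s reachable from s, the set of vertices in the subtree of T rooted at u equals exactly the set of vertices v such that v is reachable from s in g and v is not reachable from s in the induced subgraph on V(g) \ {u}. In particular, the size of the subtree rooted at u equals the decrease in the number of s-reachable vertices caused by deleting u. -/

import Mathlib

/-- Reachability from `s` in the induced subgraph of the digraph `adj` obtained by
deleting the vertex set `B`. -/
def reachOutside {V : Type*} (adj : V → V → Prop) (B : Set V) (s v : V) : Prop :=
  Relation.ReflTransGen (fun a b => adj a b ∧ a ∉ B ∧ b ∉ B) s v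

/-- `p` is a directed walk from `s` to `v` in the digraph `adj`. -/
def IsWalk {V : Type*} (adj : V → V → Prop) (s v : V) (p : List V) : Prop :=
  p.Chain' adj ∧ p.head? = some s ∧ p.getLast? = some v

/-- `u` dominates `v` with respect to the source `s`: every walk from `s` to `v`
passes through `u`. -/
def Dominates {V : Type*} (adj : V → V → Prop) (s u v : V) : Prop :=
  ∀ p : List V, IsWalk adj s v p → u ∈ p

/-- `u` is the immediate dominator of `v` w.r.t. `s`: `u ≠ v`, `u` dominates `v`, and
every other dominator of `v` (besides `v`) dominates `u`. -/
def ImmDom {V : Type*} (adj : V → V → Prop) (s u v : V) : Prop :=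
  u ≠ v ∧ Dominates adj s u v ∧ ∀ w, w ≠ v → Dominates adj s w v → Dominates adj s w u

section lemmas
variable {V : Type*} {adj : V → V → Prop} {B : Set V} {s v a : V}

lemma walk_of_reach (hs : s ∉ B) (h : reachOutside adj B s v) :
    ∃ p, IsWalk adj s v p ∧ ∀ x ∈ p, x ∉ B := by
  induction h with
  | refl => exact ⟨[s], ⟨List.isChain_singleton s, rfl, rfl⟩, by simpa using hs⟩
  | tail h₁ h₂ ih =>
    rename_i b c
    obtain ⟨p, ⟨hc, hh, hl⟩, hB⟩ := ih
    obtain ⟨hadj, hbB, hcB⟩ := h₂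
    refine ⟨p ++ [c], ⟨?_, ?_, ?_⟩, ?_⟩
    · refine List.IsChain.append hc (List.isChain_singleton c) ?_
      intro x hx y hy
      simp at hy; subst hy
      rw [hl] at hx; simp at hx; subst hx; exact hadj
    · have hne : p ≠ [] := by rintro rfl; simp at hh
      rw [List.head?_append_of_ne_nil _ hne]; exact hh
    · simp [List.getLast?_concat]
    · intro x hx
      rcases List.mem_append.1 hx with h | h
      · exact hB x h
      · simp at h; subst h; exact hcB

lemma reach_of_walk : ∀ p : List V, IsWalk adj s v p → (∀ x ∈ p, x ∉ B) →
    reachOutside adj B s v := by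
  intro p
  induction p using List.reverseRecOn generalizing v with
  | nil => rintro ⟨_, hh, _⟩; simp at hh
  | append_singleton q c ih =>
    rintro ⟨hc, hh, hl⟩ hB
    rw [List.getLast?_concat] at hl
    have hcv : c = v := by injection hl
    subst hcv
    rcases eq_or_ne q [] with rfl | hq
    · simp at hh; subst hh; exact Relation.ReflTransGen.refl
    · set b := q.getLast hq with hbdef
      have hbl : q.getLast? = some b := List.getLast?_eq_getLast hq
      have hcq : q.Chain' adj := hc.prefix ⟨[c], rfl⟩
      have hhq : q.head? = some s := by
        rwa [List.head?_append_of_ne_nil _ hq] at hh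
      have hadj : adj b c := by
        have := (List.isChain_append.1 hc).2.2
        exact this b hbl c rfl
      have hreach : reachOutside adj B s b :=
        ih ⟨hcq, hhq, hbl⟩ (fun x hx => hB x (List.mem_append_left _ hx))
      exact hreach.tail ⟨hadj, hB b (List.mem_append_left _ (List.getLast_mem hq)),
        hB c (by simp)⟩

lemma walk_prefix (h : IsWalk adj s v p) (ha : a ∈ p) :
    ∃ q, IsWalk adj s a q ∧ (∀ x ∈ q, x ∈ p) ∧ (a = v ∨ q.length < p.length) := by
  obtain ⟨l₁, l₂, rfl⟩ := List.append_of_mem ha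
  obtain ⟨hc, hh, hl⟩ := h
  refine ⟨l₁ ++ [a], ⟨hc.prefix ⟨l₂, by simp⟩, ?_, List.getLast?_concat⟩, ?_, ?_⟩
  · rcases eq_or_ne l₁ [] with rfl | h1
    · simpa using hh
    · rw [List.head?_append_of_ne_nil _ h1] at hh ⊢; exact hh
  · intro x hx
    rcases List.mem_append.1 hx with h | h
    · exact List.mem_append_left _ h
    · simp at h; subst h; exact ha
  · rcases eq_or_ne l₂ [] with rfl | h2
    · left
      rw [List.getLast?_concat] at hl; injection hl
    · right
      simpa using List.length_pos_iff.2 h2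

lemma walk_single : IsWalk adj s s [s] := ⟨List.isChain_singleton s, rfl, rfl⟩

lemma mem_of_walk {p : List V} (h : IsWalk adj s v p) : v ∈ p := by
  obtain ⟨_, _, hl⟩ := h
  have hne : p ≠ [] := by rintro rfl; simp at hl
  rw [List.getLast?_eq_getLast hne] at hl
  have : p.getLast hne = v := by injection hl
  exact this ▸ List.getLast_mem hne

lemma dom_self : Dominates adj s v v := fun p hp => mem_of_walk hp

lemma dom_trans {w : V} (h₁ : Dominates adj s w a) (h₂ : Dominates adj s a v) :
    Dominates adj s w v := by
  intro p hp
  obtain ⟨q, hq, hsub, _⟩ := walk_prefix hp (h₂ p hp)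
  exact hsub w (h₁ q hq)

end lemmas


/-- if every `s`-reachable vertex `v ≠ s` has a unique immediate dominator
`idom v`, then the subtree of the dominator tree rooted at a reachable `u ≠ s` is
exactly the set of vertices reachable from `s` in `g` that become unreachable when `u`
is deleted; in particular its size equals the decrease in the reachable count. -/
theorem stmt1 {V : Type*} [Fintype V] (adj : V → V → Prop) (s u : V) (idom : V → V)
    (hidom : ∀ v, v ≠ s → reachOutside adj (∅ : Set V) s v →
      ImmDom adj s (idom v) v ∧ ∀ w, ImmDom adj s w v → w = idom v)
    (hu : u ≠ s) (hru : reachOutside adj (∅ : Set V) s u) :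
    {v | Relation.ReflTransGen
          (fun a b => b ≠ s ∧ reachOutside adj (∅ : Set V) s b ∧ idom b = a) u v} =
      {v | reachOutside adj (∅ : Set V) s v ∧ ¬ reachOutside adj ({u} : Set V) s v} ∧
    {v | Relation.ReflTransGen
          (fun a b => b ≠ s ∧ reachOutside adj (∅ : Set V) s b ∧ idom b = a) u v}.ncard =
      {v | reachOutside adj (∅ : Set V) s v}.ncard -
        {v | reachOutside adj ({u} : Set V) s v}.ncard := by
  have hsu : s ∉ ({u} : Set V) := by simp [Ne.symm hu]
  have hdom_iff : ∀ v, reachOutside adj (∅ : Set V) s v →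
      (¬ reachOutside adj ({u} : Set V) s v ↔ Dominates adj s u v) := by
    intro v hv
    constructor
    · intro hnr p hp
      by_contra hup
      exact hnr (reach_of_walk p hp (fun x hx hxu => hup (by rwa [Set.mem_singleton_iff.1 hxu] at hx)))
    · intro hd hr
      obtain ⟨p, hp, hpB⟩ := walk_of_reach hsu hr
      exact hpB u (hd p hp) rfl
  have key : ∀ n : ℕ, ∀ v, ∀ p : List V, IsWalk adj s v p → p.length ≤ n →
      Dominates adj s u v → Relation.ReflTransGen
        (fun a b => b ≠ s ∧ reachOutside adj (∅ : Set V) s b ∧ idom b = a) u v := by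
    intro n
    induction n with
    | zero =>
      intro v p hp hlen _
      obtain ⟨_, hh, _⟩ := hp
      have hne : p ≠ [] := by rintro rfl; simp at hh
      exact absurd (List.length_eq_zero_iff.1 (Nat.le_zero.1 hlen)) hne
    | succ n ih =>
      intro v p hp hlen hd
      rcases eq_or_ne u v with rfl | huv
      · exact Relation.ReflTransGen.refl
      · have hvs : v ≠ s := by
          intro hvss
          rw [hvss] at hd
          have h2 := hd [s] walk_single
          simp at h2
          exact hu h2
        have hvr : reachOutside adj (∅ : Set V) s v :=
          reach_of_walk p hp (by simp)
        obtain ⟨⟨hne, hdomi, hleast⟩, -⟩ := hidom v hvs hvr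
        have hdua : Dominates adj s u (idom v) := hleast u huv hd
        obtain ⟨q, hq, -, hcase⟩ := walk_prefix hp (hdomi p hp)
        rcases hcase with heq | hlt
        · exact absurd heq hne
        · have hqr : reachOutside adj (∅ : Set V) s (idom v) :=
            reach_of_walk q hq (by simp)
          have hsub := ih (idom v) q hq (Nat.lt_succ_iff.1 (lt_of_lt_of_le hlt hlen)) hdua
          exact hsub.tail ⟨hvs, hvr, rfl⟩
  have hset : {v | Relation.ReflTransGen
          (fun a b => b ≠ s ∧ reachOutside adj (∅ : Set V) s b ∧ idom b = a) u v} =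
      {v | reachOutside adj (∅ : Set V) s v ∧ ¬ reachOutside adj ({u} : Set V) s v} := by
    ext v
    simp only [Set.mem_setOf_eq]
    constructor
    · intro h
      induction h with
      | refl => exact ⟨hru, (hdom_iff u hru).2 dom_self⟩
      | tail hab hstep ihh =>
        rename_i a b
        obtain ⟨hbs, hbr, hib⟩ := hstep
        obtain ⟨har, hanr⟩ := ihh
        have hda : Dominates adj s u a := (hdom_iff a har).1 hanr
        obtain ⟨⟨_, hdomi, _⟩, -⟩ := hidom b hbs hbr
        rw [hib] at hdomi
        exact ⟨hbr, (hdom_iff b hbr).2 (dom_trans hda hdomi)⟩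
    · rintro ⟨hr, hnr⟩
      obtain ⟨p, hp, -⟩ := walk_of_reach (by simp) hr
      exact key p.length v p hp le_rfl ((hdom_iff v hr).1 hnr)
  refine ⟨hset, ?_⟩
  rw [hset]
  have hsub : {v | reachOutside adj ({u} : Set V) s v} ⊆
      {v | reachOutside adj (∅ : Set V) s v} := by
    intro v hv
    exact Relation.ReflTransGen.mono (r := fun a b => adj a b ∧ a ∉ ({u} : Set V) ∧ b ∉ ({u} : Set V))
      (p := fun a b => adj a b ∧ a ∉ (∅ : Set V) ∧ b ∉ (∅ : Set V))
      (fun a b ⟨h, _, _⟩ => ⟨h, by simp, by simp⟩) _ _ hv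
  have hdiff : {v | reachOutside adj (∅ : Set V) s v ∧
      ¬ reachOutside adj ({u} : Set V) s v} =
      {v | reachOutside adj (∅ : Set V) s v} \ {v | reachOutside adj ({u} : Set V) s v} := rfl
  rw [hdiff, Set.ncard_diff hsub]
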